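/- Let X be a finite simple graph and suppose E_x ∈ M_d(ℝ) (x ∈ V(X)) are real symmetric idempotent matrices, each of rank r ≥ 1, such that E_x·E_{x'} = 0 whenever x,x' are adjacent in X (a real d/r-projective representation of X). Then there exist unit vectors v_x ∈ ℝ^{d²} (x ∈ V(X)) and a unit vector c ∈ ℝ^{d²} such that v_x · v_{x'} = 0 whenever x,x' are adjacent in X, and c · v_x = √(r/d) for every x ∈ V(X). Consequently, in Lovász's handle characterization of the theta function, ϑ̄(X) ≤ d/r, so ϑ̄(X) ≤ ξ_f(X). -/

import Mathlib

open Matrix Finset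

/-- A quantum homomorphism from `X` to `Y`: for some `d ≥ 1` there are complex `d × d`
projectors `E x y` (Hermitian idempotents) with `∑ y, E x y = 1` for every `x`,
`E x y * E x y' = 0` whenever `y ≠ y'`, and `E x y * E x' y' = 0` whenever `x, x'`
are adjacent in `X` and `y, y'` are equal or nonadjacent in `Y`. -/
def IsQuantumHom {V W : Type} [Fintype V] [Fintype W]
    (X : SimpleGraph V) (Y : SimpleGraph W) : Prop :=
  ∃ d : ℕ, 0 < d ∧ ∃ E : V → W → Matrix (Fin d) (Fin d) ℂ,
    (∀ x y, (E x y).IsHermitian ∧ E x y * E x y = E x y) ∧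
    (∀ x, ∑ y, E x y = 1) ∧
    (∀ x y y', y ≠ y' → E x y * E x y' = 0) ∧
    (∀ x x' y y', X.Adj x x' → ¬ Y.Adj y y' → E x y * E x' y' = 0)

/-- The homomorphic product `X ⋉ Y`: distinct vertices `(x,y)` and `(x',y')` are adjacent
iff `x = x'`, or (`x ~ x'` in `X` and `y, y'` are equal or nonadjacent in `Y`). -/
def homProd {V W : Type} (X : SimpleGraph V) (Y : SimpleGraph W) :
    SimpleGraph (V × W) where
  Adj a b := a ≠ b ∧ (a.1 = b.1 ∨ (X.Adj a.1 b.1 ∧ ¬ Y.Adj a.2 b.2))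
  symm := ⟨by
    rintro a b ⟨hne, h⟩
    refine ⟨hne.symm, ?_⟩
    rcases h with h | ⟨h1, h2⟩
    · exact Or.inl h.symm
    · exact Or.inr ⟨h1.symm, fun hb => h2 hb.symm⟩⟩
  loopless := ⟨fun a ha => ha.1 rfl⟩

/-- The independence number: the largest size of a set of pairwise nonadjacent vertices. -/
noncomputable def indepNum {U : Type} [Fintype U] (Z : SimpleGraph U) : ℕ :=
  sSup {n | ∃ s : Finset U, s.card = n ∧ ∀ a ∈ s, ∀ b ∈ s, a ≠ b → ¬ Z.Adj a b}


/-- From a real `d/r`-projective representation of `X` one obtains unit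
vectors `v x ∈ ℝ^{d²}` (orthogonal for adjacent vertices) together with a unit handle `c`
satisfying `c · v x = √(r/d)`; consequently `ϑ̄(X) ≤ d/r`, so `ϑ̄(X) ≤ ξ_f(X)`. -/
lemma trace_eq_rank_of_idem {d : ℕ} (A : Matrix (Fin d) (Fin d) ℝ)
    (h : A * A = A) : A.trace = (A.rank : ℝ) := by
  have hproj : LinearMap.IsProj (LinearMap.range A.mulVecLin) A.mulVecLin := by
    constructor
    · intro x; exact LinearMap.mem_range_self _ x
    · rintro x ⟨y, rfl⟩
      have := congrArg Matrix.mulVecLin h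
      rw [Matrix.mulVecLin_mul] at this
      exact congrFun (congrArg DFunLike.coe this) y
  have htr := hproj.trace
  have h2 : LinearMap.trace ℝ (Fin d → ℝ) A.mulVecLin = A.trace := by
    rw [LinearMap.trace_eq_matrix_trace ℝ (Pi.basisFun ℝ (Fin d)),
      LinearMap.toMatrix_eq_toMatrix']
    congr 1
    exact LinearMap.toMatrix'_toLin' A
  rw [← h2, htr]
  rfl

lemma sum_entrywise {d : ℕ} (A B : Matrix (Fin d) (Fin d) ℝ) :
    ∑ p : Fin d × Fin d, A p.1 p.2 * B p.1 p.2 = (A * Bᵀ).trace := by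
  rw [Fintype.sum_prod_type]
  simp [Matrix.trace, Matrix.diag, Matrix.mul_apply, Matrix.transpose_apply]

theorem handle_of_real_projRep {V : Type} [Fintype V]
    (X : SimpleGraph V) (d r : ℕ) (hd : 1 ≤ d) (hr : 1 ≤ r)
    (E : V → Matrix (Fin d) (Fin d) ℝ)
    (hE : ∀ x, (E x).IsSymm ∧ E x * E x = E x ∧ (E x).rank = r)
    (hadj : ∀ x x', X.Adj x x' → E x * E x' = 0) :
    ∃ (v : V → (Fin d × Fin d → ℝ)) (c : Fin d × Fin d → ℝ),
      (∀ x, ∑ i, v x i * v x i = 1) ∧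
      (∑ i, c i * c i = 1) ∧
      (∀ x x', X.Adj x x' → ∑ i, v x i * v x' i = 0) ∧
      (∀ x, ∑ i, c i * v x i = Real.sqrt ((r : ℝ) / d)) := by
  have hr0 : (0:ℝ) < r := by exact_mod_cast hr
  have hd0 : (0:ℝ) < d := by exact_mod_cast hd
  have hsr : (0:ℝ) < Real.sqrt r := Real.sqrt_pos.2 hr0
  have hsd : (0:ℝ) < Real.sqrt d := Real.sqrt_pos.2 hd0
  have htrE : ∀ x, (E x).trace = (r : ℝ) := fun x => by
    rw [trace_eq_rank_of_idem _ (hE x).2.1, (hE x).2.2]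
  refine ⟨fun x p => E x p.1 p.2 / Real.sqrt r,
    fun p => (1 : Matrix (Fin d) (Fin d) ℝ) p.1 p.2 / Real.sqrt d, ?_, ?_, ?_, ?_⟩
  · intro x
    have : ∑ p : Fin d × Fin d, E x p.1 p.2 / Real.sqrt r * (E x p.1 p.2 / Real.sqrt r)
        = (∑ p : Fin d × Fin d, E x p.1 p.2 * E x p.1 p.2) / r := by
      rw [Finset.sum_div]
      refine Finset.sum_congr rfl fun p _ => ?_
      rw [div_mul_div_comm, Real.mul_self_sqrt hr0.le]
    rw [this, sum_entrywise, (hE x).1.eq, (hE x).2.1, htrE]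
    field_simp
  · have : ∑ p : Fin d × Fin d, (1 : Matrix (Fin d) (Fin d) ℝ) p.1 p.2 / Real.sqrt d *
        ((1 : Matrix (Fin d) (Fin d) ℝ) p.1 p.2 / Real.sqrt d)
        = (∑ p : Fin d × Fin d, (1 : Matrix (Fin d) (Fin d) ℝ) p.1 p.2 *
          (1 : Matrix (Fin d) (Fin d) ℝ) p.1 p.2) / d := by
      rw [Finset.sum_div]
      refine Finset.sum_congr rfl fun p _ => ?_
      rw [div_mul_div_comm, Real.mul_self_sqrt hd0.le]
    rw [this, sum_entrywise]
    simp [Matrix.trace]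
    omega
  · intro x x' h
    have : ∑ p : Fin d × Fin d, E x p.1 p.2 / Real.sqrt r * (E x' p.1 p.2 / Real.sqrt r)
        = (∑ p : Fin d × Fin d, E x p.1 p.2 * E x' p.1 p.2) / r := by
      rw [Finset.sum_div]
      refine Finset.sum_congr rfl fun p _ => ?_
      rw [div_mul_div_comm, Real.mul_self_sqrt hr0.le]
    rw [this, sum_entrywise, (hE x').1.eq, hadj x x' h]
    simp
  · intro x
    have : ∑ p : Fin d × Fin d, (1 : Matrix (Fin d) (Fin d) ℝ) p.1 p.2 / Real.sqrt d *
        (E x p.1 p.2 / Real.sqrt r)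
        = (∑ p : Fin d × Fin d, (1 : Matrix (Fin d) (Fin d) ℝ) p.1 p.2 * E x p.1 p.2)
          / (Real.sqrt d * Real.sqrt r) := by
      rw [Finset.sum_div]
      refine Finset.sum_congr rfl fun p _ => ?_
      ring
    rw [this, sum_entrywise, (hE x).1.eq, Matrix.one_mul, htrE]
    have key : Real.sqrt ((r:ℝ)/d) = Real.sqrt r / Real.sqrt d := Real.sqrt_div hr0.le d
    rw [key, div_eq_div_iff (by positivity) hsd.ne']
    have := Real.mul_self_sqrt hr0.le
    nlinarith
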